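/- arXiv:2509.19293 — 2 statements merged into one kernel-verified Lean document; each statement's English description precedes it below -/
import Mathlib

section
/- Let V = EuclideanSpace ℝ (Fin n), Ω ⊆ V a nonempty proper open convex cone, ψ the dual map of Ω, H ⊆ V a linear subspace, and C_H := {ω ∈ Ω : ψ(ω) ∈ H^⊥}. Then for every ω ∈ C_H one has (ω + H) ∩ C_H = {ω}; that is, if h ∈ H satisfies ω + h ∈ Ω and ψ(ω + h) ∈ H^⊥, then h = 0. -/
open Set Filter
open scoped Pointwise RealInnerProductSpace

/-- A subset `C` of a real vector space is a cone if `t • x ∈ C` for all `x ∈ C`, `t > 0`. -/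
def IsCone {V : Type*} [AddCommGroup V] [Module ℝ V] (C : Set V) : Prop :=
  ∀ x ∈ C, ∀ t : ℝ, 0 < t → t • x ∈ C

/-- The open dual cone of an open cone `Ω` with respect to the inner product. -/
def openDualCone {V : Type*} [NormedAddCommGroup V] [InnerProductSpace ℝ V] (Ω : Set V) :
    Set V :=
  {v | ∀ ω ∈ closure Ω, ω ≠ 0 → 0 < ⟪v, ω⟫}

open MeasureTheory

/-- The characteristic function of a proper open convex cone `Ω ⊆ EuclideanSpace ℝ (Fin n)`:
`φ(ω) = ∫_{Ω*} exp (−⟪ω, y⟫) dy`, the integral over the open dual cone with respect to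
Lebesgue measure. -/
noncomputable def charFun {n : ℕ} (Ω : Set (EuclideanSpace ℝ (Fin n)))
    (ω : EuclideanSpace ℝ (Fin n)) : ℝ :=
  ∫ y in openDualCone Ω, Real.exp (-⟪ω, y⟫)

/-- The dual map `ψ(ω) = ω* := −∇(log φ)(ω)` of a cone `Ω`, where `φ` is its characteristic
function and the gradient is taken with respect to the inner product. -/
noncomputable def dualMap {n : ℕ} (Ω : Set (EuclideanSpace ℝ (Fin n)))
    (ω : EuclideanSpace ℝ (Fin n)) : EuclideanSpace ℝ (Fin n) :=
  -gradient (fun x => Real.log (charFun Ω x)) ω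

section Aux

variable {n : ℕ} {Ω : Set (EuclideanSpace ℝ (Fin n))}

local notation "V" => EuclideanSpace ℝ (Fin n)






lemma closure_cone' (hcone : IsCone Ω) {x : V} (hx : x ∈ closure Ω) {t : ℝ} (ht : 0 < t) :
    t • x ∈ closure Ω := by
  have h1 : t • x ∈ (fun y : V => t • y) '' closure Ω := ⟨x, hx, rfl⟩
  have h2 := image_closure_subset_closure_image (f := fun y : V => t • y)
    (continuous_const_smul t) (s := Ω) h1
  refine closure_mono ?_ h2
  rintro y ⟨z, hz, rfl⟩
  exact hcone z hz t ht

lemma zero_notMem' [Nontrivial (EuclideanSpace ℝ (Fin n))] (hopen : IsOpen Ω) (hcone : IsCone Ω)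
    (hproper : closure Ω ∩ -closure Ω = {0}) : 0 ∉ Ω := by
  intro h0
  obtain ⟨ε, hε, hball⟩ := Metric.isOpen_iff.1 hopen 0 h0
  have huniv : closure Ω = Set.univ := by
    apply eq_univ_of_forall
    intro v
    rcases eq_or_ne v 0 with rfl | hv
    · exact subset_closure h0
    · have hv2 : (ε / (2 * ‖v‖)) • v ∈ Ω := by
        apply hball
        simp only [Metric.mem_ball, dist_zero_right, norm_smul, Real.norm_eq_abs]
        have : ‖v‖ > 0 := norm_pos_iff.2 hv
        rw [abs_of_pos (by positivity)]
        rw [div_mul_eq_mul_div, mul_comm]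
        rw [div_lt_iff₀ (by positivity)]
        nlinarith
      have := hcone _ hv2 ((2 * ‖v‖) / ε) (by have : ‖v‖ > 0 := norm_pos_iff.2 hv; positivity)
      rw [smul_smul, div_mul_div_comm, mul_comm ε, div_self (by have : ‖v‖ > 0 := norm_pos_iff.2 hv; positivity), one_smul] at this
      exact subset_closure this
  obtain ⟨v, hv⟩ := exists_ne (0 : V)
  have : v ∈ closure Ω ∩ -closure Ω := by
    simp [huniv, Set.mem_neg]
  rw [hproper] at this
  exact hv this








lemma dual_isOpen' (hcone : IsCone Ω) : IsOpen (openDualCone Ω) := by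
  classical
  set K := closure Ω ∩ Metric.sphere (0 : V) 1 with hK
  have hKc : IsCompact K := (isCompact_sphere (0:V) 1).inter_left isClosed_closure
  rcases K.eq_empty_or_nonempty with hKe | hKne
  · have : openDualCone Ω = univ := by
      apply eq_univ_of_forall
      intro v ω hω hω0
      exfalso
      have hu : ‖ω‖⁻¹ • ω ∈ K := by
        constructor
        · exact closure_cone' hcone hω (by have := norm_pos_iff.2 hω0; positivity)
        · simp [norm_smul, inv_mul_cancel₀ (norm_ne_zero_iff.2 hω0)]
      rw [hKe] at hu; exact hu
    rw [this]; exact isOpen_univ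
  · rw [Metric.isOpen_iff]
    intro v₀ hv₀
    obtain ⟨u₀, hu₀K, hmin⟩ := hKc.exists_isMinOn hKne
      (Continuous.continuousOn (continuous_const.inner continuous_id : Continuous fun y : V => ⟪v₀, y⟫))
    set c : ℝ := ⟪v₀, u₀⟫ with hc
    have hcpos : 0 < c := by
      apply hv₀ u₀ hu₀K.1
      intro h
      have := hu₀K.2
      rw [h] at this
      simp at this
    refine ⟨c, hcpos, ?_⟩
    intro v hv ω hω hω0
    have hnrm : ‖ω‖ ≠ 0 := norm_ne_zero_iff.2 hω0
    have huK : ‖ω‖⁻¹ • ω ∈ K := by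
      constructor
      · exact closure_cone' hcone hω (by have := norm_pos_iff.2 hω0; positivity)
      · simp [norm_smul, inv_mul_cancel₀ hnrm]
    have h1 : c ≤ ⟪v₀, ‖ω‖⁻¹ • ω⟫ := hmin huK
    have h2 : |⟪v - v₀, ‖ω‖⁻¹ • ω⟫| ≤ ‖v - v₀‖ := by
      calc |⟪v - v₀, ‖ω‖⁻¹ • ω⟫| ≤ ‖v - v₀‖ * ‖‖ω‖⁻¹ • ω‖ := abs_real_inner_le_norm _ _
        _ = ‖v - v₀‖ := by simp [norm_smul, inv_mul_cancel₀ hnrm]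
    have hvd : ‖v - v₀‖ < c := by rwa [← dist_eq_norm]
    have h3 : 0 < ⟪v, ‖ω‖⁻¹ • ω⟫ := by
      have : ⟪v, ‖ω‖⁻¹ • ω⟫ = ⟪v₀, ‖ω‖⁻¹ • ω⟫ + ⟪v - v₀, ‖ω‖⁻¹ • ω⟫ := by
        rw [← inner_add_left]
        congr 1
        abel
      rw [this]
      have := abs_le.1 h2
      linarith
    have h4 : ⟪v, ω⟫ = ‖ω‖ * ⟪v, ‖ω‖⁻¹ • ω⟫ := by
      rw [real_inner_smul_right, ← mul_assoc, mul_inv_cancel₀ hnrm, one_mul]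
    rw [h4]
    positivity








lemma dual_nonempty' (hne : Ω.Nonempty) (hconv : Convex ℝ Ω) (hcone : IsCone Ω)
    (hproper : closure Ω ∩ -closure Ω = {0}) : (openDualCone Ω).Nonempty := by
  classical
  -- closure Ω as a convex cone
  set Kc : ConvexCone ℝ V :=
    { carrier := closure Ω
      smul_mem' := fun c hc x hx => closure_cone' hcone hx hc
      add_mem' := by
        intro x hx y hy
        have hmid : (1/2 : ℝ) • x + (1/2 : ℝ) • y ∈ closure Ω :=
          hconv.closure hx hy (by norm_num) (by norm_num) (by norm_num)
        have := closure_cone' hcone hmid (t := 2) (by norm_num)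
        rwa [smul_add, smul_smul, smul_smul, (by norm_num : (2:ℝ) * (1/2) = 1), one_smul,
          one_smul] at this } with hKc
  have hKcne : (Kc : Set V).Nonempty := hne.mono subset_closure
  have hKccl : IsClosed (Kc : Set V) := isClosed_closure
  set D : ProperCone ℝ V := ProperCone.innerDual (closure Ω) with hD
  have hDconv : Convex ℝ (D : Set V) := D.convex
  have h0D : (0 : V) ∈ (D : Set V) := D.zero_mem
  rcases (interior (D : Set V)).eq_empty_or_nonempty with hint | ⟨v, hv⟩
  · exfalso
    have haff : affineSpan ℝ (D : Set V) ≠ ⊤ := by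
      intro h
      rw [← hDconv.interior_nonempty_iff_affineSpan_eq_top] at h
      rw [hint] at h
      exact h.ne_empty rfl
    set W := (affineSpan ℝ (D : Set V)).direction with hW
    have hWne : W ≠ ⊤ := by
      intro h
      exact haff ((AffineSubspace.direction_eq_top_iff_of_nonempty
        ⟨0, subset_affineSpan ℝ _ h0D⟩).1 h)
    have hDW : ∀ d ∈ (D : Set V), d ∈ W := by
      intro d hd
      have := AffineSubspace.vsub_mem_direction (subset_affineSpan ℝ _ hd)
        (subset_affineSpan ℝ _ h0D)
      simpa using this
    have hWbot : Wᗮ ≠ ⊥ := by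
      intro h
      exact hWne (Submodule.orthogonal_eq_bot_iff.mp h)
    obtain ⟨u, huW, hu0⟩ := Submodule.exists_mem_ne_zero_of_ne_bot hWbot
    have hbi : ((ProperCone.innerDual ((ProperCone.innerDual (closure Ω) : Set V))) : Set V)
        = closure Ω := by
      have hpt : Kc.Pointed := by
        obtain ⟨x, hx⟩ := hne
        have ht : Tendsto (fun t : ℝ => t • x) (nhdsWithin 0 (Ioi 0)) (nhds 0) := by
          have hc : Continuous fun t : ℝ => t • x := continuous_id.smul continuous_const
          exact (hc.tendsto' 0 0 (by simp)).mono_left (nhdsWithin_le_nhds (s := Ioi 0))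
        exact mem_closure_of_tendsto ht
          (eventually_nhdsWithin_of_forall fun t htp => hcone x hx t htp)
      let P : ProperCone ℝ V := ⟨Kc.toPointedCone hpt, hKccl⟩
      have := ProperCone.innerDual_innerDual P
      exact congrArg (fun C : ProperCone ℝ V => (C : Set V)) this
    have hmem : ∀ w : V, w ∈ Wᗮ → w ∈ Kc := by
      intro w hw
      show w ∈ closure Ω
      rw [← hbi, SetLike.mem_coe, ProperCone.mem_innerDual]
      intro d hd
      have : ⟪d, w⟫ = 0 := (Submodule.mem_orthogonal W w).1 hw d (hDW d hd)
      rw [real_inner_comm]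
      rw [real_inner_comm] at this
      exact le_of_eq this.symm
    have hu1 : u ∈ closure Ω := hmem u huW
    have hu2 : -u ∈ closure Ω := hmem (-u) (Submodule.neg_mem _ huW)
    have : u ∈ closure Ω ∩ -closure Ω := ⟨hu1, by rwa [Set.mem_neg]⟩
    rw [hproper] at this
    exact hu0 this
  · -- interior point of the dual cone is in the open dual cone
    rw [mem_interior_iff_mem_nhds, Metric.mem_nhds_iff] at hv
    obtain ⟨ε, hε, hball⟩ := hv
    refine ⟨v, ?_⟩
    intro ω hω hω0
    have hnrm : (0:ℝ) < ‖ω‖ := norm_pos_iff.2 hω0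
    have hwmem : v - (ε/2) • (‖ω‖⁻¹ • ω) ∈ (D : Set V) := by
      apply hball
      simp only [Metric.mem_ball, dist_eq_norm, sub_sub_cancel_left, norm_neg, norm_smul,
        Real.norm_eq_abs]
      rw [abs_of_pos (by positivity), abs_of_pos (by positivity)]
      rw [inv_mul_cancel₀ (ne_of_gt hnrm), mul_one]
      linarith
    have h1 : 0 ≤ ⟪ω, v - (ε/2) • (‖ω‖⁻¹ • ω)⟫ := (ProperCone.mem_innerDual (s := closure Ω)).1 hwmem hω
    rw [inner_sub_right, real_inner_smul_right, real_inner_smul_right,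
      real_inner_self_eq_norm_sq] at h1
    have h2 : ⟪ω, v⟫ ≥ (ε/2) * (‖ω‖⁻¹ * ‖ω‖^2) := by linarith
    rw [real_inner_comm]
    have : ‖ω‖⁻¹ * ‖ω‖^2 = ‖ω‖ := by field_simp
    rw [this] at h2
    have : (0:ℝ) < (ε/2) * ‖ω‖ := by positivity
    linarith








lemma inner_lb' [Nontrivial (EuclideanSpace ℝ (Fin n))] (hopen : IsOpen Ω) (hcone : IsCone Ω)
    (hproper : closure Ω ∩ -closure Ω = {0}) {x : V} (hx : x ∈ Ω) :
    ∃ δ > 0, ∀ x' ∈ Metric.ball x δ, ∀ y ∈ openDualCone Ω, δ * ‖y‖ ≤ ⟪x', y⟫ := by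
  obtain ⟨ε, hε, hball⟩ := Metric.isOpen_iff.1 hopen x hx
  refine ⟨ε/3, by positivity, ?_⟩
  intro x' hx' y hy
  rcases eq_or_ne y 0 with rfl | hy0
  · simp
  have hnrm : (0:ℝ) < ‖y‖ := norm_pos_iff.2 hy0
  set p : V := x' - (ε/3) • (‖y‖⁻¹ • y) with hp
  have hpball : p ∈ Metric.ball x ε := by
    have h1 : dist p x' ≤ ε/3 := by
      simp only [hp, dist_eq_norm, sub_sub_cancel_left, norm_neg, norm_smul, Real.norm_eq_abs]
      rw [abs_of_pos (by positivity), abs_of_pos (by positivity),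
        inv_mul_cancel₀ (ne_of_gt hnrm), mul_one]
    have h2 : dist x' x < ε/3 := hx'
    calc dist p x ≤ dist p x' + dist x' x := dist_triangle _ _ _
      _ < ε/3 + ε/3 := by linarith
      _ < ε := by linarith
  have hpΩ : p ∈ Ω := hball hpball
  have hp0 : p ≠ 0 := fun h => zero_notMem' hopen hcone hproper (h ▸ hpΩ)
  have hineq : 0 < ⟪y, p⟫ := hy p (subset_closure hpΩ) hp0
  rw [hp, inner_sub_right, real_inner_smul_right, real_inner_smul_right,
    real_inner_self_eq_norm_sq] at hineq
  have : ‖y‖⁻¹ * ‖y‖^2 = ‖y‖ := by field_simp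
  rw [this] at hineq
  rw [real_inner_comm] at hineq
  linarith

lemma integrable_bound' {δ : ℝ} (hδ : 0 < δ) (k : ℕ) :
    Integrable (fun y : V => ‖y‖^k * Real.exp (-(δ * ‖y‖))) := by
  set m : ℕ := k + (n + 1) with hm
  set C : ℝ := 2^m * (1 + (m.factorial : ℝ)/δ^m) with hC
  have hCpos : 0 < C := by positivity
  have key : ∀ t : ℝ, 0 ≤ t → t^k * Real.exp (-(δ*t)) * (1+t)^(n+1) ≤ C := by
    intro t ht
    have hE : (0:ℝ) < Real.exp (δ*t) := Real.exp_pos _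
    have hexpneg : Real.exp (-(δ*t)) ≤ 1 :=
      Real.exp_le_one_iff.2 (neg_nonpos_of_nonneg (by positivity))
    have h2 : t^m * Real.exp (-(δ*t)) ≤ (m.factorial : ℝ)/δ^m := by
      rw [Real.exp_neg, ← div_eq_mul_inv, div_le_div_iff₀ hE (pow_pos hδ m)]
      calc t^m * δ^m = (δ*t)^m := by rw [mul_pow]; ring
        _ ≤ (m.factorial : ℝ) * Real.exp (δ*t) := by
          have := Real.pow_div_factorial_le_exp (δ*t) (by positivity) m
          rw [div_le_iff₀ (by positivity : (0:ℝ) < (m.factorial : ℝ))] at this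
          linarith
    have h1 : t^k * (1+t)^(n+1) ≤ (1+t)^m := by
      rw [hm, pow_add (1+t) k (n+1)]
      exact mul_le_mul_of_nonneg_right (pow_le_pow_left₀ ht (by linarith : t ≤ 1+t) k) (by positivity)
    have h3 : (1+t)^m ≤ 2^m * (1 + t^m) := by
      have hb : (1+t) ≤ 2 * max 1 t := by
        rcases le_total t 1 with h | h
        · rw [max_eq_left h]; linarith
        · rw [max_eq_right h]; linarith
      calc (1+t)^m ≤ (2 * max 1 t)^m := by
            apply pow_le_pow_left₀ (by linarith) hb
        _ = 2^m * (max 1 t)^m := by rw [mul_pow]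
        _ ≤ 2^m * (1 + t^m) := by
            gcongr 2^m * ?_
            rcases le_total t 1 with h | h
            · rw [max_eq_left h]; rw [one_pow]; nlinarith [pow_nonneg ht m]
            · rw [max_eq_right h]; nlinarith [pow_nonneg ht m]
    calc t^k * Real.exp (-(δ*t)) * (1+t)^(n+1)
        = t^k * (1+t)^(n+1) * Real.exp (-(δ*t)) := by ring
      _ ≤ (1+t)^m * Real.exp (-(δ*t)) := by
          apply mul_le_mul_of_nonneg_right h1 (Real.exp_pos _).le
      _ ≤ 2^m * (1 + t^m) * Real.exp (-(δ*t)) := by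
          apply mul_le_mul_of_nonneg_right h3 (Real.exp_pos _).le
      _ = 2^m * (Real.exp (-(δ*t)) + t^m * Real.exp (-(δ*t))) := by ring
      _ ≤ 2^m * (1 + (m.factorial : ℝ)/δ^m) :=
          mul_le_mul_of_nonneg_left (add_le_add hexpneg h2) (by positivity)
      _ = C := rfl
  have hint : Integrable (fun y : V => C * (1 + ‖y‖) ^ (-(n+1 : ℝ))) :=
    (integrable_one_add_norm (by
      rw [finrank_euclideanSpace_fin]
      push_cast; linarith) : Integrable (fun y : V => (1 + ‖y‖) ^ (-(n+1 : ℝ)))).const_mul C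
  apply hint.mono'
  · apply Continuous.aestronglyMeasurable
    exact ((continuous_norm.pow k).mul ((continuous_const.mul continuous_norm).neg.rexp))
  · apply ae_of_all
    intro y
    set t : ℝ := ‖y‖ with htdef
    have ht : 0 ≤ t := norm_nonneg y
    have hpow : (1 + t) ^ (-(n+1 : ℝ)) = ((1+t)^(n+1 : ℕ))⁻¹ := by
      rw [← Real.rpow_natCast (1+t) (n+1), ← Real.rpow_neg (by linarith)]
      norm_num
    rw [Real.norm_eq_abs, abs_of_nonneg (by positivity), hpow]
    have hpos : (0:ℝ) < (1+t)^(n+1 : ℕ) := by positivity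
    rw [← div_eq_mul_inv C, le_div_iff₀ hpos]
    exact key t ht











lemma integrable_pow_exp' [Nontrivial (EuclideanSpace ℝ (Fin n))] (hopen : IsOpen Ω)
    (hcone : IsCone Ω) (hproper : closure Ω ∩ -closure Ω = {0}) {x : V} (hx : x ∈ Ω) (k : ℕ) :
    IntegrableOn (fun y : V => ‖y‖^k * Real.exp (-⟪x, y⟫)) (openDualCone Ω) := by
  obtain ⟨δ, hδ, hlb⟩ := inner_lb' hopen hcone hproper hx
  apply Integrable.mono' ((integrable_bound' hδ k).restrict (s := openDualCone Ω))
  · exact (((continuous_norm.pow k).mul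
      ((continuous_const.inner continuous_id).neg.rexp)).aestronglyMeasurable)
  · filter_upwards [ae_restrict_mem (dual_isOpen' hcone).measurableSet] with y hy
    rw [Real.norm_eq_abs, abs_of_nonneg (by positivity)]
    have hlb2 := hlb x (Metric.mem_ball_self hδ) y hy
    have h2 : Real.exp (-⟪x, y⟫) ≤ Real.exp (-(δ * ‖y‖)) := by
      apply Real.exp_le_exp.2; linarith
    exact mul_le_mul_of_nonneg_left h2 (by positivity)

lemma integrable_inner_exp' [Nontrivial (EuclideanSpace ℝ (Fin n))] (hopen : IsOpen Ω)
    (hcone : IsCone Ω) (hproper : closure Ω ∩ -closure Ω = {0}) {x : V} (hx : x ∈ Ω) (h : V) :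
    IntegrableOn (fun y : V => ⟪y, h⟫ * Real.exp (-⟪x, y⟫)) (openDualCone Ω) := by
  apply Integrable.mono' (((integrable_pow_exp' hopen hcone hproper hx 1).const_mul ‖h‖))
  · exact ((continuous_id.inner continuous_const).mul
      ((continuous_const.inner continuous_id).neg.rexp)).aestronglyMeasurable
  · apply ae_of_all
    intro y
    rw [Real.norm_eq_abs, abs_mul, abs_of_nonneg (Real.exp_pos _).le, pow_one]
    have h1 : |⟪y, h⟫| ≤ ‖y‖ * ‖h‖ := abs_real_inner_le_norm y h
    calc |⟪y, h⟫| * Real.exp (-⟪x, y⟫) ≤ ‖y‖ * ‖h‖ * Real.exp (-⟪x, y⟫) := by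
          exact mul_le_mul_of_nonneg_right h1 (Real.exp_pos _).le
      _ = ‖h‖ * (‖y‖ * Real.exp (-⟪x, y⟫)) := by ring

lemma charFun_pos' (hne : Ω.Nonempty) (hconv : Convex ℝ Ω) (hcone : IsCone Ω)
    (hproper : closure Ω ∩ -closure Ω = {0}) [Nontrivial (EuclideanSpace ℝ (Fin n))]
    (hopen : IsOpen Ω) {x : V} (hx : x ∈ Ω) : 0 < charFun Ω x := by
  rw [_root_.charFun]
  rw [setIntegral_pos_iff_support_of_nonneg_ae]
  · have hsupp : (Function.support fun y : V => Real.exp (-⟪x, y⟫)) = univ := by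
      apply eq_univ_of_forall
      intro y
      exact (Real.exp_pos _).ne'
    rw [hsupp, univ_inter]
    exact ((dual_isOpen' hcone).measure_pos volume (dual_nonempty' hne hconv hcone hproper))
  · exact ae_of_all _ fun y => (Real.exp_pos _).le
  · have := integrable_pow_exp' hopen hcone hproper hx 0
    simpa using this

set_option synthInstance.maxHeartbeats 1000000 in
lemma norm_F' (x' y : EuclideanSpace ℝ (Fin n)) :
    ‖Real.exp (-⟪x', y⟫) • (-(innerSL ℝ y))‖ = Real.exp (-⟪x', y⟫) * ‖y‖ := by
  rw [norm_smul (β := EuclideanSpace ℝ (Fin n) →L[ℝ] ℝ), norm_neg, innerSL_apply_norm,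
    Real.norm_eq_abs, abs_of_nonneg (Real.exp_pos _).le]

set_option maxHeartbeats 1000000 in
set_option synthInstance.maxHeartbeats 400000 in
lemma key_zero' [Nontrivial (EuclideanSpace ℝ (Fin n))] (hne : Ω.Nonempty) (hopen : IsOpen Ω)
    (hconv : Convex ℝ Ω) (hcone : IsCone Ω) (hproper : closure Ω ∩ -closure Ω = {0})
    {x : V} (hx : x ∈ Ω) {h : V} (horth : ⟪dualMap Ω x, h⟫ = 0) :
    ∫ y in openDualCone Ω, ⟪y, h⟫ * Real.exp (-⟪x, y⟫) = 0 := by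
  obtain ⟨δ, hδ, hlb⟩ := inner_lb' hopen hcone hproper hx
  set μ : Measure V := volume.restrict (openDualCone Ω) with hμ
  set F' : V → V → (V →L[ℝ] ℝ) :=
    fun x' y => Real.exp (-⟪x', y⟫) • (-(innerSL ℝ y)) with hF'
  have hφderiv : HasFDerivAt (charFun Ω) (∫ y, F' x y ∂μ) x := by
    apply hasFDerivAt_integral_of_dominated_of_fderiv_le
      (bound := fun y : V => ‖y‖ * Real.exp (-(δ * ‖y‖))) (Metric.ball_mem_nhds x hδ)
    · exact Eventually.of_forall fun x' =>
        ((continuous_const.inner continuous_id).neg.rexp).aestronglyMeasurable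
    · have := integrable_pow_exp' hopen hcone hproper hx 0
      simp at this
      exact this
    · apply Continuous.aestronglyMeasurable
      exact (((continuous_const.inner continuous_id).neg.rexp).smul
        ((innerSL ℝ (E := V)).continuous.neg))
    · filter_upwards [ae_restrict_mem (dual_isOpen' hcone).measurableSet] with y hy
      intro x' hx'
      rw [hF']
      simp only
      rw [norm_F']
      have := hlb x' hx' y hy
      rw [mul_comm ‖y‖ (Real.exp (-(δ * ‖y‖)))]
      have h2 : Real.exp (-⟪x', y⟫) ≤ Real.exp (-(δ * ‖y‖)) :=
        Real.exp_le_exp.2 (by linarith)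
      exact mul_le_mul_of_nonneg_right h2 (norm_nonneg _)
    · have h5 := (integrable_bound' (n := n) hδ 1).restrict (s := openDualCone Ω)
      simp only [pow_one] at h5
      exact h5
    · apply ae_of_all
      intro y x' hx'
      have h0 : HasFDerivAt (fun v : V => -⟪v, y⟫) (-(innerSL ℝ y)) x' := by
        have h1 : HasFDerivAt (fun v : V => (innerSL ℝ y) v) (innerSL ℝ y) x' :=
          (innerSL ℝ y).hasFDerivAt
        have h2 : (fun v : V => -⟪v, y⟫) = fun v : V => -((innerSL ℝ y) v) := by
          funext v
          rw [innerSL_apply_apply, real_inner_comm]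
        rw [h2]
        exact h1.neg
      exact h0.exp
  have hφpos : 0 < charFun Ω x := charFun_pos' hne hconv hcone hproper hopen hx
  have hlog : HasFDerivAt (fun x' => Real.log (charFun Ω x'))
      ((charFun Ω x)⁻¹ • (∫ y, F' x y ∂μ)) x := hφderiv.log hφpos.ne'
  have hgrad : gradient (fun x' => Real.log (charFun Ω x')) x =
      (InnerProductSpace.toDual ℝ V).symm ((charFun Ω x)⁻¹ • (∫ y, F' x y ∂μ)) :=
    hlog.hasGradientAt.gradient
  have hF'int : Integrable (fun y => F' x y) μ := by
    apply Integrable.mono' ((integrable_bound' hδ 1).restrict (s := openDualCone Ω))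
    · apply Continuous.aestronglyMeasurable
      exact (((continuous_const.inner continuous_id).neg.rexp).smul
        ((innerSL ℝ (E := V)).continuous.neg))
    · filter_upwards [ae_restrict_mem (dual_isOpen' hcone).measurableSet] with y hy
      rw [hF']
      simp only
      rw [norm_F', pow_one]
      have := hlb x (Metric.mem_ball_self hδ) y hy
      calc Real.exp (-⟪x, y⟫) * ‖y‖ ≤ Real.exp (-(δ * ‖y‖)) * ‖y‖ :=
            mul_le_mul_of_nonneg_right (Real.exp_le_exp.2 (by linarith)) (norm_nonneg _)
        _ = ‖y‖ * Real.exp (-(δ * ‖y‖)) := by ring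
  -- use the orthogonality
  have h1 : ⟪gradient (fun x' => Real.log (charFun Ω x')) x, h⟫ = 0 := by
    have : dualMap Ω x = -gradient (fun x' => Real.log (charFun Ω x')) x := rfl
    rw [this, inner_neg_left] at horth
    linarith
  rw [hgrad, InnerProductSpace.toDual_symm_apply] at h1
  rw [ContinuousLinearMap.smul_apply] at h1
  have h2 : (∫ y, F' x y ∂μ) h = 0 := by
    rcases mul_eq_zero.1 h1 with h | h
    · exact absurd h (by simp [hφpos.ne'])
    · exact h
  rw [ContinuousLinearMap.integral_apply hF'int] at h2
  have h3 : ∀ y : V, (F' x y) h = -(⟪y, h⟫ * Real.exp (-⟪x, y⟫)) := by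
    intro y
    rw [hF']
    simp only [ContinuousLinearMap.smul_apply, ContinuousLinearMap.neg_apply, innerSL_apply_apply,
      smul_eq_mul]
    ring
  rw [show (fun y => (F' x y) h) = fun y => -(⟪y, h⟫ * Real.exp (-⟪x, y⟫)) from funext h3]
    at h2
  rw [integral_neg] at h2
  have := neg_eq_zero.1 h2
  exact this


end Aux

theorem stmt_9 {n : ℕ} (Ω : Set (EuclideanSpace ℝ (Fin n)))
    (hne : Ω.Nonempty) (hopen : IsOpen Ω) (hconv : Convex ℝ Ω)
    (hcone : IsCone Ω) (hproper : closure Ω ∩ -closure Ω = {0})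
    (H : Submodule ℝ (EuclideanSpace ℝ (Fin n)))
    (C_H : Set (EuclideanSpace ℝ (Fin n)))
    (hC_H : C_H = {ω ∈ Ω | dualMap Ω ω ∈ Hᗮ})
    (ω : EuclideanSpace ℝ (Fin n)) (hω : ω ∈ C_H) :
    ({x | ∃ h ∈ H, x = ω + h} ∩ C_H = {ω}) ∧
      ∀ h ∈ H, ω + h ∈ Ω → dualMap Ω (ω + h) ∈ Hᗮ → h = 0 := by
  have main : ∀ h ∈ H, ω + h ∈ Ω → dualMap Ω (ω + h) ∈ Hᗮ → h = 0 := by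
    intro h hH hΩ hdual
    rcases subsingleton_or_nontrivial (EuclideanSpace ℝ (Fin n)) with hsub | hnontriv
    · exact Subsingleton.elim h 0
    · rw [hC_H] at hω
      obtain ⟨hωΩ, hωdual⟩ := hω
      -- orthogonality relations
      have horth1 : ⟪dualMap Ω ω, h⟫ = 0 := by
        rw [real_inner_comm]
        exact (Submodule.mem_orthogonal H (dualMap Ω ω)).1 hωdual h hH
      have horth2 : ⟪dualMap Ω (ω + h), h⟫ = 0 := by
        rw [real_inner_comm]
        exact (Submodule.mem_orthogonal H (dualMap Ω (ω + h))).1 hdual h hH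
      have I1 := key_zero' hne hopen hconv hcone hproper hωΩ horth1
      have I2 := key_zero' hne hopen hconv hcone hproper hΩ horth2
      set f : EuclideanSpace ℝ (Fin n) → ℝ :=
        fun y => ⟪y, h⟫ * Real.exp (-⟪ω, y⟫) - ⟪y, h⟫ * Real.exp (-⟪ω + h, y⟫) with hf
      have hInt : IntegrableOn f (openDualCone Ω) :=
        (integrable_inner_exp' hopen hcone hproper hωΩ h).sub
          (integrable_inner_exp' hopen hcone hproper hΩ h)
      have hIzero : ∫ y in openDualCone Ω, f y = 0 := by
        rw [hf]
        rw [integral_sub (integrable_inner_exp' hopen hcone hproper hωΩ h)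
          (integrable_inner_exp' hopen hcone hproper hΩ h), I1, I2, sub_zero]
      have hkey : ∀ y : EuclideanSpace ℝ (Fin n), ⟪ω + h, y⟫ = ⟪ω, y⟫ + ⟪h, y⟫ :=
        fun y => inner_add_left _ _ _
      have hnonneg : 0 ≤ f := by
        intro y
        simp only [hf, Pi.zero_apply]
        rcases le_total 0 ⟪y, h⟫ with hs | hs
        · have : Real.exp (-⟪ω + h, y⟫) ≤ Real.exp (-⟪ω, y⟫) := by
            apply Real.exp_le_exp.2
            rw [hkey y]
            have : 0 ≤ ⟪h, y⟫ := by rwa [real_inner_comm]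
            linarith
          have := mul_le_mul_of_nonneg_left this hs
          linarith
        · have : Real.exp (-⟪ω, y⟫) ≤ Real.exp (-⟪ω + h, y⟫) := by
            apply Real.exp_le_exp.2
            rw [hkey y]
            have : ⟪h, y⟫ ≤ 0 := by rwa [real_inner_comm]
            linarith
          have := mul_le_mul_of_nonpos_left this hs
          linarith
      have hae : f =ᵐ[volume.restrict (openDualCone Ω)] 0 :=
        (integral_eq_zero_iff_of_nonneg hnonneg hInt).1 hIzero
      by_contra hh0
      -- the set where ⟪y, h⟫ ≠ 0
      have hsubset : {y : EuclideanSpace ℝ (Fin n) | ⟪y, h⟫ ≠ 0} ⊆ {y | f y ≠ 0} := by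
        intro y hy
        simp only [mem_setOf_eq] at hy ⊢
        rw [hf]
        have hne' : Real.exp (-⟪ω, y⟫) ≠ Real.exp (-⟪ω + h, y⟫) := by
          intro hcontra
          have := Real.exp_injective hcontra
          rw [hkey y] at this
          have hhy : ⟪h, y⟫ = 0 := by linarith
          rw [real_inner_comm] at hhy
          exact hy hhy
        intro hcontra
        have hsplit : ⟪y, h⟫ * (Real.exp (-⟪ω, y⟫) - Real.exp (-⟪ω + h, y⟫)) = 0 := by
          rw [mul_sub]; exact hcontra
        rcases mul_eq_zero.1 hsplit with h' | h'
        · exact hy h'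
        · exact hne' (by linarith)
      have hopenS : IsOpen {y : EuclideanSpace ℝ (Fin n) | ⟪y, h⟫ ≠ 0} :=
        isOpen_ne_fun (continuous_id.inner continuous_const) continuous_const
      have hmeasS : MeasurableSet {y : EuclideanSpace ℝ (Fin n) | ⟪y, h⟫ ≠ 0} :=
        hopenS.measurableSet
      -- the "bad" set has measure zero
      have hNnull : volume.restrict (openDualCone Ω) {y | f y ≠ 0} = 0 := by
        have := hae
        rw [Filter.EventuallyEq, ae_iff] at this
        simpa using this
      have hSnull : volume ({y : EuclideanSpace ℝ (Fin n) | ⟪y, h⟫ ≠ 0} ∩ openDualCone Ω) = 0 := by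
        have h1 : volume.restrict (openDualCone Ω) {y : EuclideanSpace ℝ (Fin n) | ⟪y, h⟫ ≠ 0}
            ≤ volume.restrict (openDualCone Ω) {y | f y ≠ 0} := measure_mono hsubset
        rw [hNnull] at h1
        rw [Measure.restrict_apply hmeasS] at h1
        exact le_antisymm (le_of_le_of_eq h1 rfl) zero_le
      -- the kernel hyperplane has measure zero
      set W : Submodule ℝ (EuclideanSpace ℝ (Fin n)) := (Submodule.span ℝ {h})ᗮ with hW
      have hWne : W ≠ ⊤ := by
        intro htop
        have : h ∈ W := htop ▸ Submodule.mem_top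
        have h0 : ⟪h, h⟫ = 0 := (Submodule.mem_orthogonal _ h).1 this h
          (Submodule.mem_span_singleton_self h)
        rw [real_inner_self_eq_norm_sq] at h0
        exact hh0 (by simpa using h0)
      have hWnull : volume (W : Set (EuclideanSpace ℝ (Fin n))) = 0 :=
        Measure.addHaar_submodule volume W hWne
      have hker : {y : EuclideanSpace ℝ (Fin n) | ⟪y, h⟫ = 0} ⊆ (W : Set (EuclideanSpace ℝ (Fin n))) := by
        intro y hy
        rw [SetLike.mem_coe, hW, Submodule.mem_orthogonal]
        intro u hu
        obtain ⟨c, rfl⟩ := Submodule.mem_span_singleton.1 hu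
        rw [real_inner_smul_left, real_inner_comm]
        simp only [mem_setOf_eq] at hy
        rw [hy, mul_zero]
      have hcover : openDualCone Ω ⊆
          ({y : EuclideanSpace ℝ (Fin n) | ⟪y, h⟫ ≠ 0} ∩ openDualCone Ω) ∪
            (W : Set (EuclideanSpace ℝ (Fin n))) := by
        intro y hy
        rcases eq_or_ne (⟪y, h⟫ : ℝ) 0 with h' | h'
        · exact Or.inr (hker h')
        · exact Or.inl ⟨h', hy⟩
      have hdnull : volume (openDualCone Ω) = 0 := by
        have := measure_mono (μ := volume) hcover
        have h2 := (measure_union_le (μ := volume)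
          ({y : EuclideanSpace ℝ (Fin n) | ⟪y, h⟫ ≠ 0} ∩ openDualCone Ω)
          (W : Set (EuclideanSpace ℝ (Fin n))))
        rw [hSnull, hWnull] at h2
        simpa using le_trans this h2
      have hdpos := (dual_isOpen' hcone).measure_pos volume
        (dual_nonempty' hne hconv hcone hproper)
      rw [hdnull] at hdpos
      exact lt_irrefl 0 hdpos
  refine ⟨?_, main⟩
  apply Set.eq_singleton_iff_unique_mem.2
  constructor
  · exact ⟨⟨0, H.zero_mem, by simp⟩, hω⟩
  · rintro x ⟨⟨h, hH, rfl⟩, hx⟩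
    rw [hC_H] at hx
    obtain ⟨hxΩ, hxdual⟩ := hx
    rw [main h hH hxΩ hxdual, add_zero]
end

section
/- Let V = EuclideanSpace ℝ (Fin n), Ω ⊆ V a nonempty proper open convex cone, ψ the dual map of Ω, H ⊆ V a linear subspace, C_H := {ω ∈ Ω : ψ(ω) ∈ H^⊥}, and M_H := {(v, ω) ∈ V × V : ω ∈ C_H} (corresponding to V + iC_H ⊆ V^ℂ). Then for every x ∈ M_H one has (x + H × H) ∩ M_H = x + H × {0}; that is, the H^ℂ-orbit of x meets M_H exactly in the H-orbit of x. -/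
open Set Filter
open scoped Pointwise RealInnerProductSpace

open MeasureTheory

lemma poly_exp_bound (ε : ℝ) (hε : 0 < ε) (m : ℕ) (t : ℝ) (ht : 0 ≤ t) :
    (1 + t) ^ m * Real.exp (-(ε * t)) ≤ (max 1 (m / ε)) ^ m := by
  set c : ℝ := max 1 (m / ε) with hc
  have hc1 : 1 ≤ c := le_max_left _ _
  have hcm : (m : ℝ) / ε ≤ c := le_max_right _ _
  have hexp1 : Real.exp (-(ε * t)) ≤ 1 := by
    rw [Real.exp_le_one_iff]; nlinarith
  rcases Nat.eq_zero_or_pos m with h | h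
  · subst h
    simpa using hexp1
  have hm : (0:ℝ) < m := by exact_mod_cast h
  have hceps : 1 ≤ c * (ε / m) := by
    rw [div_le_iff₀ hε] at hcm
    rw [show c * (ε/(m:ℝ)) = (c*ε)/m by ring, le_div_iff₀ hm]
    linarith
  have h1 : 1 + t ≤ c * (1 + ε * t / m) := by
    have h2 : t ≤ c * (ε * t / m) := by
      calc t = 1 * t := (one_mul t).symm
      _ ≤ (c * (ε / m)) * t := by gcongr
      _ = c * (ε * t / m) := by ring
    nlinarith
  have h2 : (1 + t) ^ m ≤ c ^ m * (1 + ε * t / m) ^ m := by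
    rw [← mul_pow]
    exact pow_le_pow_left₀ (by positivity) h1 m
  have h3 : (1 + ε * t / m) ^ m ≤ Real.exp (ε * t) := by
    calc (1 + ε * t / m) ^ m ≤ (Real.exp (ε * t / m)) ^ m := by
          apply pow_le_pow_left₀ (by positivity) (by linarith [Real.add_one_le_exp (ε * t / m)])
    _ = Real.exp (ε * t) := by
          rw [← Real.exp_nat_mul]; congr 1; field_simp
  have h4 : c ^ m * (1 + ε * t / m) ^ m ≤ c ^ m * Real.exp (ε * t) := by
    have : (0:ℝ) ≤ c ^ m := by positivity
    nlinarith
  calc (1 + t) ^ m * Real.exp (-(ε * t))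
      ≤ (c ^ m * Real.exp (ε * t)) * Real.exp (-(ε*t)) :=
        mul_le_mul_of_nonneg_right (h2.trans h4) (Real.exp_nonneg _)
  _ = c ^ m := by rw [mul_assoc, ← Real.exp_add, add_neg_cancel, Real.exp_zero, mul_one]

lemma integrable_pow_mul_exp (n k : ℕ) (ε : ℝ) (hε : 0 < ε) :
    Integrable (fun y : EuclideanSpace ℝ (Fin n) => ‖y‖ ^ k * Real.exp (-(ε * ‖y‖))) volume := by
  set C : ℝ := (max 1 ((n + 1 + k : ℕ) / ε)) ^ (n + 1 + k) with hC
  have hr : (Module.finrank ℝ (EuclideanSpace ℝ (Fin n)) : ℝ) < ((n+1 : ℕ) : ℝ) := by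
    rw [finrank_euclideanSpace_fin]; exact_mod_cast Nat.lt_succ_self n
  have hint : Integrable (fun y : EuclideanSpace ℝ (Fin n) => C * (1 + ‖y‖) ^ (-((n+1:ℕ):ℝ))) volume :=
    (integrable_one_add_norm hr).const_mul C
  apply hint.mono' ?_ ?_
  · apply Continuous.aestronglyMeasurable
    exact (continuous_norm.pow k).mul (Real.continuous_exp.comp ((continuous_const.mul continuous_norm)).neg)
  · filter_upwards with y
    set t : ℝ := ‖y‖ with htdef
    have ht : 0 ≤ t := norm_nonneg y
    have h1t : (0:ℝ) < 1 + t := by linarith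
    rw [Real.norm_eq_abs, abs_of_nonneg (by positivity)]
    rw [Real.rpow_neg h1t.le, Real.rpow_natCast]
    rw [le_mul_inv_iff₀ (by positivity : (0:ℝ) < (1+t)^(n+1))]
    calc t ^ k * Real.exp (-(ε * t)) * (1 + t) ^ (n+1)
        ≤ (1 + t) ^ k * Real.exp (-(ε * t)) * (1 + t) ^ (n+1) := by
          have : t ^ k ≤ (1+t)^k := pow_le_pow_left₀ ht (by linarith) k
          have h0 : (0:ℝ) ≤ Real.exp (-(ε * t)) * (1 + t) ^ (n+1) := by positivity
          nlinarith [mul_le_mul_of_nonneg_right this h0]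
    _ = (1 + t) ^ (n + 1 + k) * Real.exp (-(ε * t)) := by
          rw [show n + 1 + k = k + (n+1) by ring, pow_add]; ring
    _ ≤ C := poly_exp_bound ε hε (n+1+k) t ht

section Geometry
variable {n : ℕ}
local notation "V" => EuclideanSpace ℝ (Fin n)

lemma cone_add_mem {Ω : Set V} (hconv : Convex ℝ Ω) (hcone : IsCone Ω)
    {x y : V} (hx : x ∈ Ω) (hy : y ∈ Ω) : x + y ∈ Ω := by
  have h := hconv hx hy (by norm_num : (0:ℝ) ≤ 1/2) (by norm_num : (0:ℝ) ≤ 1/2) (by norm_num)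
  have h2 := hcone _ h 2 (by norm_num)
  have e : (2:ℝ) • ((1/2 : ℝ) • x + (1/2 : ℝ) • y) = x + y := by
    rw [smul_add, smul_smul, smul_smul]; norm_num
  rwa [e] at h2

lemma closure_smul_mem {Ω : Set V} (hcone : IsCone Ω)
    {z : V} (hz : z ∈ closure Ω) {c : ℝ} (hc : 0 < c) : c • z ∈ closure Ω :=
  map_mem_closure (continuous_id'.const_smul c) hz fun x hx => hcone x hx c hc

lemma closure_add_mem {Ω : Set V} (hconv : Convex ℝ Ω) (hcone : IsCone Ω)
    {z w : V} (hz : z ∈ closure Ω) (hw : w ∈ closure Ω) : z + w ∈ closure Ω :=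
  map_mem_closure₂ continuous_add hz hw fun _ ha _ hb => cone_add_mem hconv hcone ha hb

lemma zero_mem_closure {Ω : Set V} (hne : Ω.Nonempty) (hcone : IsCone Ω) :
    (0:V) ∈ closure Ω := by
  obtain ⟨x, hx⟩ := hne
  have ht : Tendsto (fun t : ℝ => t • x) (nhdsWithin 0 (Ioi 0)) (nhds 0) := by
    have h : Tendsto (fun t : ℝ => t • x) (nhds 0) (nhds ((0:ℝ) • x)) :=
      (continuous_id.smul continuous_const).tendsto 0
    rw [zero_smul] at h
    exact h.mono_left nhdsWithin_le_nhds
  refine mem_closure_of_tendsto ht ?_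
  filter_upwards [self_mem_nhdsWithin] with t htt
  exact hcone x hx t htt

/-- The open dual cone is open. -/
lemma isOpen_openDualCone {Ω : Set V} (hcone : IsCone Ω) : IsOpen (openDualCone Ω) := by
  rw [Metric.isOpen_iff]
  intro v hv
  set K : Set V := closure Ω ∩ Metric.sphere (0:V) 1 with hK
  have hKc : IsCompact K := (isCompact_sphere 0 1).inter_left isClosed_closure
  obtain ⟨δ, hδpos, hδ⟩ : ∃ δ > 0, ∀ k ∈ K, δ ≤ ⟪v, k⟫ := by
    rcases K.eq_empty_or_nonempty with h | h
    · exact ⟨1, one_pos, by simp [h]⟩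
    · obtain ⟨k₀, hk₀K, hmin⟩ := hKc.exists_isMinOn h
        (Continuous.continuousOn (continuous_const.inner continuous_id :
          Continuous fun k : EuclideanSpace ℝ (Fin n) => (⟪v, k⟫ : ℝ)))
      refine ⟨⟪v, k₀⟫, hv k₀ hk₀K.1 ?_, fun k hk => hmin hk⟩
      intro h0
      have : ‖k₀‖ = 1 := by simpa using hk₀K.2
      rw [h0] at this; simp at this
  refine ⟨δ, hδpos, fun w hw z hz hz0 => ?_⟩
  have hnz : (0:ℝ) < ‖z‖ := norm_pos_iff.mpr hz0
  have hu : ‖z‖⁻¹ • z ∈ K := by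
    constructor
    · exact closure_smul_mem hcone hz (by positivity)
    · simp [norm_smul, abs_of_pos (by positivity : (0:ℝ) < ‖z‖⁻¹), inv_mul_cancel₀ hnz.ne']
  have h1 : δ ≤ ⟪v, ‖z‖⁻¹ • z⟫ := hδ _ hu
  have h2 : |⟪w - v, ‖z‖⁻¹ • z⟫| ≤ ‖w - v‖ := by
    calc |⟪w - v, ‖z‖⁻¹ • z⟫| ≤ ‖w - v‖ * ‖‖z‖⁻¹ • z‖ := abs_real_inner_le_norm _ _
    _ = ‖w - v‖ := by
        rw [norm_smul]
        simp [abs_of_pos (by positivity : (0:ℝ) < ‖z‖⁻¹), inv_mul_cancel₀ hnz.ne']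
  have hwv : ‖w - v‖ < δ := by rwa [Metric.mem_ball, dist_eq_norm] at hw
  have h3 : 0 < ⟪w, ‖z‖⁻¹ • z⟫ := by
    rw [inner_sub_left] at h2
    have := abs_le.mp h2
    linarith
  have : ⟪w, z⟫ = ‖z‖ * ⟪w, ‖z‖⁻¹ • z⟫ := by
    rw [real_inner_smul_right]
    field_simp
  rw [this]
  positivity

end Geometry

section Geometry2
variable {n : ℕ}
local notation "V" => EuclideanSpace ℝ (Fin n)

/-- closure of Ω as a convex cone -/
noncomputable def closureCone {Ω : Set V} (hconv : Convex ℝ Ω) (hcone : IsCone Ω) :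
    ConvexCone ℝ V where
  carrier := closure Ω
  smul_mem' c hc x hx := closure_smul_mem hcone hx hc
  add_mem' _ hx _ hy := closure_add_mem hconv hcone hx hy

lemma nonempty_interior_dual {Ω : Set V} (hne : Ω.Nonempty) (hconv : Convex ℝ Ω)
    (hcone : IsCone Ω) (hproper : closure Ω ∩ -closure Ω = {0}) :
    (interior (ProperCone.innerDual (closure Ω) : Set V)).Nonempty := by
  set S : Set V := (ProperCone.innerDual (closure Ω) : Set V) with hS
  have h0S : (0:V) ∈ S := by
    rw [hS, SetLike.mem_coe, ProperCone.mem_innerDual]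
    intro x _; simp
  have hSconv : Convex ℝ S := (ProperCone.innerDual (closure Ω)).convex
  rw [hSconv.interior_nonempty_iff_affineSpan_eq_top]
  have hspan : Submodule.span ℝ S = ⊤ := by
    by_contra hW
    obtain ⟨u, huW, hu0⟩ : ∃ u, u ∈ (Submodule.span ℝ S)ᗮ ∧ u ≠ 0 := by
      have hbot : (Submodule.span ℝ S)ᗮ ≠ ⊥ := by
        rw [Ne, Submodule.orthogonal_eq_bot_iff]; exact hW
      exact Submodule.exists_mem_ne_zero_of_ne_bot hbot
    have hdual : ∀ c : ℝ, (c • u) ∈ ProperCone.innerDual S := by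
      intro c
      rw [ProperCone.mem_innerDual]
      intro x hx
      have : ⟪x, u⟫ = 0 := (Submodule.mem_orthogonal _ _).mp huW x (Submodule.subset_span hx)
      rw [real_inner_smul_right, this, mul_zero]
    have hbip : ((ProperCone.innerDual (ProperCone.innerDual (closure Ω) : Set V)) : Set V)
        = closure Ω := by
      let P : ProperCone ℝ V :=
        { carrier := closure Ω
          add_mem' := fun hx hy => closure_add_mem hconv hcone hx hy
          zero_mem' := zero_mem_closure hne hcone
          smul_mem' := fun c x hx => by
            rcases eq_or_lt_of_le c.2 with h | h
            · have : c = 0 := Subtype.ext h.symm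
              subst this; rw [zero_smul]; exact zero_mem_closure hne hcone
            · exact closure_smul_mem hcone hx h
          isClosed' := isClosed_closure }
      exact congrArg (fun C : ProperCone ℝ V => (C : Set V)) (ProperCone.innerDual_innerDual P)
    have hmem : ∀ c : ℝ, c • u ∈ closure Ω := by
      intro c
      have h1 : c • u ∈ ((ProperCone.innerDual (ProperCone.innerDual (closure Ω) : Set V)) : Set V) :=
        hdual c
      rw [hbip] at h1
      exact h1
    have h1 : u ∈ closure Ω := by simpa using hmem 1
    have h2 : -u ∈ closure Ω := by simpa using hmem (-1)
    have : u ∈ closure Ω ∩ -closure Ω := ⟨h1, by simpa using h2⟩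
    rw [hproper] at this
    exact hu0 this
  rw [AffineSubspace.affineSpan_eq_top_iff_vectorSpan_eq_top_of_nonempty ℝ (EuclideanSpace ℝ (Fin n)) (EuclideanSpace ℝ (Fin n)) ⟨0, h0S⟩]
  rw [vectorSpan_def]
  rw [eq_top_iff, ← hspan]
  apply Submodule.span_mono
  intro x hx
  exact ⟨x, hx, 0, h0S, by simp⟩

lemma interior_dual_subset {Ω : Set V}
    {v : V} (hv : v ∈ interior (ProperCone.innerDual (closure Ω) : Set V)) :
    v ∈ openDualCone Ω := by
  intro z hz hz0
  obtain ⟨δ, hδ, hball⟩ := Metric.isOpen_iff.mp isOpen_interior v hv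
  have hnz : (0:ℝ) < ‖z‖ := norm_pos_iff.mpr hz0
  set c : ℝ := (δ/2) * ‖z‖⁻¹ with hc
  have hv' : v - c • z ∈ (ProperCone.innerDual (closure Ω) : Set V) := by
    apply interior_subset
    apply hball
    rw [Metric.mem_ball, dist_eq_norm]
    have : ‖v - c • z - v‖ = c * ‖z‖ := by
      rw [show v - c • z - v = -(c • z) by abel, norm_neg, norm_smul,
        Real.norm_eq_abs, abs_of_pos (by positivity)]
    rw [this, hc]
    rw [mul_assoc, inv_mul_cancel₀ hnz.ne', mul_one]
    linarith
  have h0 : 0 ≤ ⟪z, v - c • z⟫ := by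
    rw [SetLike.mem_coe, ProperCone.mem_innerDual] at hv'
    exact hv' hz
  rw [inner_sub_right, real_inner_smul_right, real_inner_self_eq_norm_sq] at h0
  have : (0:ℝ) < c * (‖z‖ * ‖z‖) := by positivity
  rw [real_inner_comm]
  nlinarith
end Geometry2

section Coercive
variable {n : ℕ}

lemma coercive {Ω : Set (EuclideanSpace ℝ (Fin n))} (hopen : IsOpen Ω)
    {ω₀ : EuclideanSpace ℝ (Fin n)} (hω₀ : ω₀ ∈ Ω) :
    ∃ ε > 0, ∀ ω ∈ Metric.ball ω₀ ε, ∀ y ∈ openDualCone Ω, ε * ‖y‖ ≤ ⟪ω, y⟫ := by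
  obtain ⟨ε2, hε2, hball⟩ := Metric.isOpen_iff.mp hopen ω₀ hω₀
  refine ⟨ε2/3, by positivity, fun ω hω y hy => ?_⟩
  rcases eq_or_ne y 0 with rfl | hy0
  · simp
  have hny : (0:ℝ) < ‖y‖ := norm_pos_iff.mpr hy0
  set ε : ℝ := ε2/3 with hε
  set u : EuclideanSpace ℝ (Fin n) := ‖y‖⁻¹ • y with hu
  have hzΩ : ω - ε • u ∈ closure Ω := by
    apply subset_closure
    apply hball
    rw [Metric.mem_ball, dist_eq_norm]
    have hn : ‖ω - ε • u - ω₀‖ ≤ ‖ω - ω₀‖ + ‖ε • u‖ := by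
      have : ω - ε • u - ω₀ = (ω - ω₀) + -(ε • u) := by abel
      rw [this]
      simpa using norm_add_le (ω - ω₀) (-(ε • u))
    have hun : ‖u‖ = 1 := by
      rw [hu, norm_smul, Real.norm_eq_abs, abs_of_pos (by positivity), inv_mul_cancel₀ hny.ne']
    have : ‖ε • u‖ = ε := by
      rw [norm_smul, hun, Real.norm_eq_abs, abs_of_pos (by positivity), mul_one]
    rw [Metric.mem_ball, dist_eq_norm] at hω
    calc ‖ω - ε • u - ω₀‖ ≤ ‖ω - ω₀‖ + ‖ε • u‖ := hn
    _ < ε + ε := by rw [this]; linarith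
    _ < ε2 := by rw [hε]; linarith
  have h0 : 0 ≤ ⟪y, ω - ε • u⟫ := by
    rcases eq_or_ne (ω - ε • u) 0 with h | h
    · rw [h, inner_zero_right]
    · exact (hy _ hzΩ h).le
  rw [inner_sub_right, real_inner_smul_right, hu, real_inner_smul_right,
    real_inner_self_eq_norm_sq] at h0
  have he : ‖y‖⁻¹ * (‖y‖^2) = ‖y‖ := by field_simp
  rw [he] at h0
  rw [real_inner_comm]
  linarith
end Coercive

section Analysis
variable {n : ℕ}
local notation "V" => EuclideanSpace ℝ (Fin n)

/-- pointwise bound on the dual cone -/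
lemma exp_bound_on_dual {Ω : Set V} {ε : ℝ} {ω : V}
    (hcoer : ∀ y ∈ openDualCone Ω, ε * ‖y‖ ≤ ⟪ω, y⟫) {y : V} (hy : y ∈ openDualCone Ω) :
    Real.exp (-⟪y, ω⟫) ≤ Real.exp (-(ε * ‖y‖)) := by
  rw [Real.exp_le_exp, neg_le_neg_iff, real_inner_comm]
  exact hcoer y hy

lemma integrableOn_inner_pow_exp {Ω : Set V} (hD : MeasurableSet (openDualCone Ω))
    {ε : ℝ} (hε : 0 < ε) {ω : V}
    (hcoer : ∀ y ∈ openDualCone Ω, ε * ‖y‖ ≤ ⟪ω, y⟫) (h : V) (k : ℕ) :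
    IntegrableOn (fun y => ⟪h,y⟫ ^ k * Real.exp (-⟪y, ω⟫)) (openDualCone Ω) volume := by
  have hint : Integrable
      (fun y : V => ‖h‖ ^ k * (‖y‖ ^ k * Real.exp (-(ε * ‖y‖)))) volume :=
    (integrable_pow_mul_exp n k ε hε).const_mul _
  apply (hint.restrict (s := openDualCone Ω)).mono'
  · apply Continuous.aestronglyMeasurable
    apply Continuous.mul
    · exact (continuous_const.inner continuous_id).pow k
    · exact Real.continuous_exp.comp (((continuous_id.inner continuous_const)).neg)
  · rw [ae_restrict_iff' hD]
    filter_upwards with y hy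
    rw [Real.norm_eq_abs, abs_mul, abs_of_pos (Real.exp_pos _), abs_pow]
    have h1 : |⟪h,y⟫| ^ k ≤ (‖h‖ * ‖y‖) ^ k :=
      pow_le_pow_left₀ (abs_nonneg _) (abs_real_inner_le_norm h y) k
    have h2 := exp_bound_on_dual hcoer hy
    calc |⟪h,y⟫| ^ k * Real.exp (-⟪y, ω⟫)
        ≤ (‖h‖ * ‖y‖) ^ k * Real.exp (-(ε * ‖y‖)) := by
          apply mul_le_mul h1 h2 (Real.exp_nonneg _) (by positivity)
    _ = ‖h‖ ^ k * (‖y‖ ^ k * Real.exp (-(ε * ‖y‖))) := by rw [mul_pow]; ring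

lemma integrableOn_exp {Ω : Set V} (hD : MeasurableSet (openDualCone Ω))
    {ε : ℝ} (hε : 0 < ε) {ω : V}
    (hcoer : ∀ y ∈ openDualCone Ω, ε * ‖y‖ ≤ ⟪ω, y⟫) :
    IntegrableOn (fun y => Real.exp (-⟪y, ω⟫)) (openDualCone Ω) volume := by
  have := integrableOn_inner_pow_exp hD hε hcoer 0 0
  simpa using this

lemma integrableOn_smul_exp {Ω : Set V} (hD : MeasurableSet (openDualCone Ω))
    {ε : ℝ} (hε : 0 < ε) {ω : V}
    (hcoer : ∀ y ∈ openDualCone Ω, ε * ‖y‖ ≤ ⟪ω, y⟫) :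
    IntegrableOn (fun y : V => Real.exp (-⟪y, ω⟫) • y) (openDualCone Ω) volume := by
  have hint : Integrable (fun y : V => ‖y‖ ^ 1 * Real.exp (-(ε * ‖y‖))) volume :=
    integrable_pow_mul_exp n 1 ε hε
  apply (hint.restrict (s := openDualCone Ω)).mono'
  · apply Continuous.aestronglyMeasurable
    exact (Real.continuous_exp.comp (((continuous_id.inner continuous_const)).neg)).smul
      continuous_id
  · rw [ae_restrict_iff' hD]
    filter_upwards with y hy
    rw [norm_smul, Real.norm_eq_abs, abs_of_pos (Real.exp_pos _), pow_one, mul_comm ‖y‖]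
    exact mul_le_mul_of_nonneg_right (exp_bound_on_dual hcoer hy) (norm_nonneg _)

end Analysis



section Grad
variable {n : ℕ}
local notation "V" => EuclideanSpace ℝ (Fin n)

lemma charFun_eq (Ω : Set V) (ω : V) :
    charFun Ω ω = ∫ y in openDualCone Ω, Real.exp (-⟪y, ω⟫) := by
  unfold _root_.charFun
  congr 1
  funext y
  rw [real_inner_comm]

lemma hasGradientAt_charFun {Ω : Set V} (hopen : IsOpen Ω) (hD : MeasurableSet (openDualCone Ω))
    {ω₀ : V} (hω₀ : ω₀ ∈ Ω) :
    HasGradientAt (charFun Ω)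
      (-(∫ y in openDualCone Ω, Real.exp (-⟪y, ω₀⟫) • y)) ω₀ := by
  obtain ⟨ε, hε, hcoer⟩ := coercive hopen hω₀
  have hcoer₀ := hcoer ω₀ (Metric.mem_ball_self hε)
  set D := openDualCone Ω with hDdef
  set F : V → V → ℝ := fun ω y => Real.exp (-⟪y, ω⟫) with hF
  set F' : V → V → (V →L[ℝ] ℝ) := fun ω y => Real.exp (-⟪y, ω⟫) • (-(innerSL ℝ y)) with hF'
  set bound : V → ℝ := fun y => ‖y‖ ^ 1 * Real.exp (-(ε * ‖y‖)) with hbounddef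
  have hFmeas : ∀ᶠ ω in nhds ω₀, AEStronglyMeasurable (F ω) (volume.restrict D) := by
    filter_upwards with ω
    exact ((Real.continuous_exp.comp
      ((continuous_id.inner continuous_const)).neg)).aestronglyMeasurable
  have hFint : Integrable (F ω₀) (volume.restrict D) := integrableOn_exp hD hε hcoer₀
  have hF'meas : AEStronglyMeasurable (F' ω₀) (volume.restrict D) := by
    apply Continuous.aestronglyMeasurable
    rw [hF']
    apply Continuous.fun_smul
    · exact Real.continuous_exp.comp ((continuous_id.inner continuous_const)).neg
    · exact ((innerSL ℝ : V →L⋆[ℝ] V →L[ℝ] ℝ).continuous).neg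
  have hbound : ∀ᵐ y ∂(volume.restrict D), ∀ ω ∈ Metric.ball ω₀ ε, ‖F' ω y‖ ≤ bound y := by
    rw [ae_restrict_iff' hD]
    filter_upwards with y hy ω hω
    have hnrm : ‖F' ω y‖ = Real.exp (-⟪y, ω⟫) * ‖y‖ := by
      show ‖Real.exp (-⟪y, ω⟫) • (-(innerSL ℝ y))‖ = _
      rw [norm_smul (Real.exp (-⟪y, ω⟫)) (-(innerSL ℝ y)), norm_neg, innerSL_apply_norm,
        Real.norm_eq_abs, abs_of_pos (Real.exp_pos _)]
    rw [hnrm, hbounddef]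
    have h2 : Real.exp (-⟪y, ω⟫) ≤ Real.exp (-(ε * ‖y‖)) := exp_bound_on_dual (hcoer ω hω) hy
    calc Real.exp (-⟪y, ω⟫) * ‖y‖ ≤ Real.exp (-(ε * ‖y‖)) * ‖y‖ :=
          mul_le_mul_of_nonneg_right h2 (norm_nonneg _)
    _ = ‖y‖ ^ 1 * Real.exp (-(ε * ‖y‖)) := by rw [pow_one]; ring
  have hbi : Integrable bound (volume.restrict D) := (integrable_pow_mul_exp n 1 ε hε).restrict
  have hdiff : ∀ᵐ y ∂(volume.restrict D), ∀ ω ∈ Metric.ball ω₀ ε,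
      HasFDerivAt (F · y) (F' ω y) ω := by
    filter_upwards with y ω hω
    have hL : HasFDerivAt (fun ω : V => (-(innerSL ℝ y) : V →L[ℝ] ℝ) ω)
        (-(innerSL ℝ y)) ω := (-(innerSL ℝ y)).hasFDerivAt
    have hc := (Real.hasDerivAt_exp ((-(innerSL ℝ y) : V →L[ℝ] ℝ) ω)).comp_hasFDerivAt ω hL
    have hfun : (Real.exp ∘ fun ω : V => (-(innerSL ℝ y) : V →L[ℝ] ℝ) ω) = (F · y) := by
      funext w
      simp [hF, Function.comp, innerSL_apply_apply]
    rw [hfun] at hc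
    exact hc
  have key := hasFDerivAt_integral_of_dominated_of_fderiv_le (Metric.ball_mem_nhds ω₀ hε) hFmeas hFint hF'meas hbound
    hbi hdiff
  have hIF' : Integrable (F' ω₀) (volume.restrict D) := by
    apply hbi.mono' hF'meas
    filter_upwards [hbound] with y hy
    exact hy ω₀ (Metric.mem_ball_self hε)
  have hsm := integrableOn_smul_exp hD hε hcoer₀
  have hEq : (InnerProductSpace.toDual ℝ V) (-(∫ y in D, Real.exp (-⟪y, ω₀⟫) • y))
      = ∫ y in D, F' ω₀ y := by
    apply ContinuousLinearMap.ext
    intro u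
    rw [ContinuousLinearMap.integral_apply hIF']
    rw [InnerProductSpace.toDual_apply_apply, inner_neg_left, real_inner_comm]
    rw [← integral_inner hsm u, ← integral_neg]
    apply integral_congr_ae
    filter_upwards with y
    rw [hF']
    simp only [ContinuousLinearMap.smul_apply, ContinuousLinearMap.neg_apply, innerSL_apply_apply,
      real_inner_smul_right, smul_eq_mul]
    rw [real_inner_comm u y]
    ring
  have hfun2 : (fun ω => ∫ y in D, F ω y) = charFun Ω := by
    funext ω
    rw [charFun_eq, hF]
  rw [hasGradientAt_iff_hasFDerivAt, hEq, ← hfun2]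
  exact key
end Grad

section Pos
variable {n : ℕ}
local notation "V" => EuclideanSpace ℝ (Fin n)

lemma charFun_pos {Ω : Set V} (hopen : IsOpen Ω) (hDopen : IsOpen (openDualCone Ω))
    (hDne : (openDualCone Ω).Nonempty) {ω : V} (hω : ω ∈ Ω) : 0 < charFun Ω ω := by
  rw [charFun_eq]
  obtain ⟨ε, hε, hcoer⟩ := coercive hopen hω
  have hcoer₀ := hcoer ω (Metric.mem_ball_self hε)
  rw [setIntegral_pos_iff_support_of_nonneg_ae
    (Filter.Eventually.of_forall fun y => (Real.exp_pos _).le)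
    (integrableOn_exp hDopen.measurableSet hε hcoer₀)]
  have hsupp : Function.support (fun y : V => Real.exp (-⟪y, ω⟫)) = univ :=
    eq_univ_iff_forall.mpr fun y => Function.mem_support.mpr (Real.exp_pos _).ne'
  rw [hsupp, univ_inter]
  exact hDopen.measure_pos volume hDne

lemma dualMap_eq {Ω : Set V} (hopen : IsOpen Ω) (hDopen : IsOpen (openDualCone Ω))
    (hDne : (openDualCone Ω).Nonempty) {ω : V} (hω : ω ∈ Ω) :
    dualMap Ω ω = (charFun Ω ω)⁻¹ • (∫ y in openDualCone Ω, Real.exp (-⟪y, ω⟫) • y) := by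
  have hg := hasGradientAt_charFun hopen hDopen.measurableSet hω
  have hpos := charFun_pos hopen hDopen hDne hω
  set I : V := ∫ y in openDualCone Ω, Real.exp (-⟪y, ω⟫) • y with hI
  have hlog : HasGradientAt (fun x => Real.log (charFun Ω x))
      ((charFun Ω ω)⁻¹ • (-I)) ω := by
    have hf := hasGradientAt_iff_hasFDerivAt.mp hg
    have hl := (Real.hasDerivAt_log hpos.ne').comp_hasFDerivAt ω hf
    rw [hasGradientAt_iff_hasFDerivAt]
    have heq : (InnerProductSpace.toDual ℝ V) ((charFun Ω ω)⁻¹ • (-I))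
        = (charFun Ω ω)⁻¹ • (InnerProductSpace.toDual ℝ V) (-I) := by
      apply ContinuousLinearMap.ext
      intro u
      simp only [InnerProductSpace.toDual_apply_apply, ContinuousLinearMap.smul_apply,
        real_inner_smul_left, smul_eq_mul]
    rw [heq]
    exact hl
  have hgrad := hlog.gradient
  rw [dualMap, hgrad, smul_neg, neg_neg]

lemma integral_inner_exp_eq_zero {Ω : Set V} (hopen : IsOpen Ω)
    (hDopen : IsOpen (openDualCone Ω)) (hDne : (openDualCone Ω).Nonempty)
    {ω h : V} (hω : ω ∈ Ω) (horth : ⟪dualMap Ω ω, h⟫ = 0) :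
    ∫ y in openDualCone Ω, ⟪h, y⟫ * Real.exp (-⟪y, ω⟫) = 0 := by
  have hd := dualMap_eq hopen hDopen hDne hω
  have hpos := charFun_pos hopen hDopen hDne hω
  rw [hd, real_inner_smul_left] at horth
  have hI : ⟪∫ y in openDualCone Ω, Real.exp (-⟪y, ω⟫) • y, h⟫ = 0 := by
    rcases mul_eq_zero.mp horth with h1 | h1
    · exact absurd h1 (inv_ne_zero hpos.ne')
    · exact h1
  obtain ⟨ε, hε, hcoer⟩ := coercive hopen hω
  have hcoer₀ := hcoer ω (Metric.mem_ball_self hε)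
  have hsm := integrableOn_smul_exp hDopen.measurableSet hε hcoer₀
  rw [real_inner_comm, ← integral_inner hsm h] at hI
  rw [← hI]
  apply integral_congr_ae
  filter_upwards with y
  rw [real_inner_smul_right, mul_comm]

end Pos

section Key
variable {n : ℕ}
local notation "V" => EuclideanSpace ℝ (Fin n)

lemma hasDerivAt_J {Ω : Set V} (hopen : IsOpen Ω) (hDopen : IsOpen (openDualCone Ω))
    (hDne : (openDualCone Ω).Nonempty) (h : V) {ω : V} {t₀ : ℝ} (hseg : ω + t₀ • h ∈ Ω) :
    HasDerivAt (fun t : ℝ => ∫ y in openDualCone Ω, ⟪h, y⟫ * Real.exp (-⟪y, ω + t • h⟫))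
      (-∫ y in openDualCone Ω, ⟪h, y⟫ ^ 2 * Real.exp (-⟪y, ω + t₀ • h⟫)) t₀ ∧
    (h ≠ 0 → 0 < ∫ y in openDualCone Ω, ⟪h, y⟫ ^ 2 * Real.exp (-⟪y, ω + t₀ • h⟫)) := by
  set D := openDualCone Ω with hDdef
  have hD : MeasurableSet D := hDopen.measurableSet
  obtain ⟨ε, hε, hcoer⟩ := coercive hopen hseg
  have hcoer₀ := hcoer _ (Metric.mem_ball_self hε)
  set δ : ℝ := ε / (‖h‖ + 1) with hδdef
  have hδ : 0 < δ := by positivity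
  have hballmem : ∀ s ∈ Metric.ball t₀ δ, ω + s • h ∈ Metric.ball (ω + t₀ • h) ε := by
    intro s hs
    rw [Metric.mem_ball, dist_eq_norm] at hs ⊢
    have he : ω + s • h - (ω + t₀ • h) = (s - t₀) • h := by
      rw [sub_smul]; abel
    rw [he, norm_smul, Real.norm_eq_abs]
    calc |s - t₀| * ‖h‖ ≤ |s - t₀| * (‖h‖ + 1) := by
          apply mul_le_mul_of_nonneg_left _ (abs_nonneg _); linarith
    _ < δ * (‖h‖ + 1) := by apply mul_lt_mul_of_pos_right hs; positivity
    _ = ε := by rw [hδdef]; field_simp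
  set F : ℝ → V → ℝ := fun s y => ⟪h, y⟫ * Real.exp (-⟪y, ω + s • h⟫) with hF
  set F' : ℝ → V → ℝ := fun s y => -(⟪h, y⟫ ^ 2 * Real.exp (-⟪y, ω + s • h⟫)) with hF'
  have hcont : ∀ s : ℝ, Continuous (F s) := fun s =>
    (continuous_const.inner continuous_id).mul
      (Real.continuous_exp.comp ((continuous_id.inner continuous_const)).neg)
  have hFmeas : ∀ᶠ s in nhds t₀, AEStronglyMeasurable (F s) (volume.restrict D) := by
    filter_upwards with s; exact (hcont s).aestronglyMeasurable
  have hFint : Integrable (F t₀) (volume.restrict D) := by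
    have := integrableOn_inner_pow_exp hD hε hcoer₀ h 1
    simpa [hF, IntegrableOn] using this
  have hF'meas : AEStronglyMeasurable (F' t₀) (volume.restrict D) := by
    apply Continuous.aestronglyMeasurable
    exact (((continuous_const.inner continuous_id).pow 2).mul
      (Real.continuous_exp.comp ((continuous_id.inner continuous_const)).neg)).neg
  set bound : V → ℝ := fun y => ‖h‖ ^ 2 * (‖y‖ ^ 2 * Real.exp (-(ε * ‖y‖))) with hbd
  have hbound : ∀ᵐ y ∂(volume.restrict D), ∀ s ∈ Metric.ball t₀ δ, ‖F' s y‖ ≤ bound y := by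
    rw [ae_restrict_iff' hD]
    filter_upwards with y hy s hs
    have h2 : Real.exp (-⟪y, ω + s • h⟫) ≤ Real.exp (-(ε * ‖y‖)) :=
      exp_bound_on_dual (hcoer _ (hballmem s hs)) hy
    have h1 : ⟪h, y⟫ ^ 2 ≤ ‖h‖ ^ 2 * ‖y‖ ^ 2 := by
      rw [← sq_abs, ← mul_pow]
      exact pow_le_pow_left₀ (abs_nonneg _) (abs_real_inner_le_norm h y) 2
    have hnrm : ‖F' s y‖ = ⟪h, y⟫ ^ 2 * Real.exp (-⟪y, ω + s • h⟫) := by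
      rw [Real.norm_eq_abs, abs_neg, abs_of_nonneg (by positivity)]
    rw [hnrm, hbd]
    calc ⟪h, y⟫ ^ 2 * Real.exp (-⟪y, ω + s • h⟫)
        ≤ (‖h‖ ^ 2 * ‖y‖ ^ 2) * Real.exp (-(ε * ‖y‖)) :=
          mul_le_mul h1 h2 (Real.exp_nonneg _) (by positivity)
    _ = ‖h‖ ^ 2 * (‖y‖ ^ 2 * Real.exp (-(ε * ‖y‖))) := by ring
  have hbi : Integrable bound (volume.restrict D) :=
    ((integrable_pow_mul_exp n 2 ε hε).const_mul _).restrict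
  have hdiff : ∀ᵐ y ∂(volume.restrict D), ∀ s ∈ Metric.ball t₀ δ,
      HasDerivAt (F · y) (F' s y) s := by
    filter_upwards with y s _
    have hinner : ∀ u : ℝ, ⟪y, ω + u • h⟫ = ⟪y, ω⟫ + u * ⟪y, h⟫ := fun u => by
      rw [inner_add_right, real_inner_smul_right]
    have base : HasDerivAt (fun u : ℝ => ⟪y, ω⟫ + u * ⟪y, h⟫) ⟪y, h⟫ s :=
      (hasDerivAt_mul_const ⟪y, h⟫).const_add ⟪y, ω⟫
    have hexp := (base.neg).exp
    have hmul := hexp.const_mul ⟪h, y⟫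
    have hfeq : (F · y) = fun u : ℝ => ⟪h, y⟫ * Real.exp (-(⟪y, ω⟫ + u * ⟪y, h⟫)) := by
      funext u
      rw [hF]
      simp only
      rw [hinner u]
    rw [hfeq]
    refine hmul.congr_deriv ?_
    rw [hF']
    simp only [Pi.neg_apply]
    rw [hinner s, real_inner_comm y h]
    ring
  have hmain := hasDerivAt_integral_of_dominated_loc_of_deriv_le (Metric.ball_mem_nhds t₀ hδ) hFmeas hFint hF'meas
    hbound hbi hdiff
  constructor
  · have := hmain.2
    rw [hF'] at this
    simpa [integral_neg] using this
  · intro hh0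
    have hint2 := integrableOn_inner_pow_exp hD hε hcoer₀ h 2
    rw [setIntegral_pos_iff_support_of_nonneg_ae
      (Filter.Eventually.of_forall fun y => by positivity) hint2]
    set Z : Set (EuclideanSpace ℝ (Fin n)) := ((Submodule.span ℝ {h})ᗮ : Set (EuclideanSpace ℝ (Fin n))) with hZdef
    have hZ : volume Z = 0 := by
      apply MeasureTheory.Measure.addHaar_submodule
      intro htop
      have hmem : h ∈ (Submodule.span ℝ {h})ᗮ := htop ▸ Submodule.mem_top
      have : ⟪h, h⟫ = 0 := Submodule.mem_orthogonal_singleton_iff_inner_right.mp hmem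
      exact hh0 (inner_self_eq_zero.mp this)
    set S : Set (EuclideanSpace ℝ (Fin n)) :=
      Function.support (fun y => ⟪h, y⟫ ^ 2 * Real.exp (-⟪y, ω + t₀ • h⟫)) ∩ D with hSdef
    have hsub : D ⊆ S ∪ Z := by
      intro y hy
      by_cases hzero : ⟪h, y⟫ = 0
      · exact Or.inr (Submodule.mem_orthogonal_singleton_iff_inner_right.mpr hzero)
      · refine Or.inl ⟨Function.mem_support.mpr ?_, hy⟩
        exact mul_ne_zero (pow_ne_zero _ hzero) (Real.exp_pos _).ne'
    have hpos : 0 < volume D := hDopen.measure_pos volume hDne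
    have hle : volume D ≤ volume S + volume Z :=
      (measure_mono hsub).trans (measure_union_le S Z)
    rw [hZ, add_zero] at hle
    exact lt_of_lt_of_le hpos hle

lemma key_h_zero {Ω : Set V} (hne : Ω.Nonempty) (hopen : IsOpen Ω) (hconv : Convex ℝ Ω)
    (hcone : IsCone Ω) (hproper : closure Ω ∩ -closure Ω = {0})
    {ω h : V} (hω : ω ∈ Ω) (hωh : ω + h ∈ Ω)
    (h0 : ⟪dualMap Ω ω, h⟫ = 0) (h1 : ⟪dualMap Ω (ω + h), h⟫ = 0) : h = 0 := by
  by_contra hh0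
  have hDopen := isOpen_openDualCone hcone
  obtain ⟨v, hv⟩ := nonempty_interior_dual hne hconv hcone hproper
  have hDne : (openDualCone Ω).Nonempty := ⟨v, interior_dual_subset hv⟩
  set J : ℝ → ℝ := fun t => ∫ y in openDualCone Ω, ⟪h, y⟫ * Real.exp (-⟪y, ω + t • h⟫) with hJ
  have hseg : ∀ t ∈ Icc (0:ℝ) 1, ω + t • h ∈ Ω := by
    intro t ht
    have := hconv.add_smul_sub_mem hω hωh ht
    simpa [add_sub_cancel_left] using this
  have hanti : StrictAntiOn J (Icc 0 1) := by
    apply strictAntiOn_of_deriv_neg (convex_Icc 0 1)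
    · intro t ht
      exact ((hasDerivAt_J hopen hDopen hDne h (hseg t ht)).1).continuousAt.continuousWithinAt
    · intro t ht
      rw [interior_Icc] at ht
      have hd := hasDerivAt_J hopen hDopen hDne h (hseg t (Ioo_subset_Icc_self ht))
      rw [hd.1.deriv]
      have := hd.2 hh0
      linarith
  have hJ0 : J 0 = 0 := by
    have he : J 0 = ∫ y in openDualCone Ω, ⟪h, y⟫ * Real.exp (-⟪y, ω⟫) := by
      rw [hJ]; simp
    rw [he]
    exact integral_inner_exp_eq_zero hopen hDopen hDne hω h0
  have hJ1 : J 1 = 0 := by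
    have he : J 1 = ∫ y in openDualCone Ω, ⟪h, y⟫ * Real.exp (-⟪y, ω + h⟫) := by
      rw [hJ]; simp
    rw [he]
    exact integral_inner_exp_eq_zero hopen hDopen hDne hωh h1
  have hlt := hanti (left_mem_Icc.mpr zero_le_one) (right_mem_Icc.mpr zero_le_one) zero_lt_one
  rw [hJ0, hJ1] at hlt
  exact lt_irrefl 0 hlt
end Key



theorem stmt_10 {n : ℕ} (Ω : Set (EuclideanSpace ℝ (Fin n)))
    (hne : Ω.Nonempty) (hopen : IsOpen Ω) (hconv : Convex ℝ Ω)
    (hcone : IsCone Ω) (hproper : closure Ω ∩ -closure Ω = {0})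
    (H : Submodule ℝ (EuclideanSpace ℝ (Fin n)))
    (C_H : Set (EuclideanSpace ℝ (Fin n)))
    (hC_H : C_H = {ω ∈ Ω | dualMap Ω ω ∈ Hᗮ})
    (M_H : Set (EuclideanSpace ℝ (Fin n) × EuclideanSpace ℝ (Fin n)))
    (hM_H : M_H = {p | p.2 ∈ C_H})
    (x : EuclideanSpace ℝ (Fin n) × EuclideanSpace ℝ (Fin n)) (hx : x ∈ M_H) :
    ({x} + (H : Set (EuclideanSpace ℝ (Fin n))) ×ˢ (H : Set (EuclideanSpace ℝ (Fin n)))) ∩ M_H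
      = {x} + (H : Set (EuclideanSpace ℝ (Fin n))) ×ˢ ({0} : Set (EuclideanSpace ℝ (Fin n))) := by
  have hxC : x.2 ∈ Ω ∧ dualMap Ω x.2 ∈ Hᗮ := by
    rw [hM_H] at hx
    rw [hC_H] at hx
    exact hx
  ext p
  constructor
  · rintro ⟨hpL, hpM⟩
    rw [Set.mem_add] at hpL
    obtain ⟨a, ha, b, hb, hab⟩ := hpL
    rw [Set.mem_singleton_iff] at ha
    rw [ha] at hab
    obtain ⟨hb1, hb2⟩ := Set.mem_prod.mp hb
    rw [hM_H, Set.mem_setOf_eq, hC_H, Set.mem_setOf_eq] at hpM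
    rw [← hab] at hpM
    have hsnd : (x + b).2 = x.2 + b.2 := rfl
    rw [hsnd] at hpM
    have h0 : ⟪dualMap Ω x.2, b.2⟫ = 0 := by
      rw [real_inner_comm]
      exact Submodule.inner_right_of_mem_orthogonal hb2 hxC.2
    have h1 : ⟪dualMap Ω (x.2 + b.2), b.2⟫ = 0 := by
      rw [real_inner_comm]
      exact Submodule.inner_right_of_mem_orthogonal hb2 hpM.2
    have hbz : b.2 = 0 := key_h_zero hne hopen hconv hcone hproper hxC.1 hpM.1 h0 h1
    rw [Set.mem_add]
    exact ⟨x, Set.mem_singleton x, b, Set.mem_prod.mpr ⟨hb1, hbz⟩, hab⟩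
  · intro hpR
    rw [Set.mem_add] at hpR
    obtain ⟨a, ha, b, hb, hab⟩ := hpR
    rw [Set.mem_singleton_iff] at ha
    rw [ha] at hab
    obtain ⟨hb1, hb2⟩ := Set.mem_prod.mp hb
    rw [Set.mem_singleton_iff] at hb2
    constructor
    · rw [Set.mem_add]
      refine ⟨x, Set.mem_singleton x, b, Set.mem_prod.mpr ⟨hb1, ?_⟩, hab⟩
      rw [hb2]
      exact H.zero_mem
    · rw [hM_H, Set.mem_setOf_eq, ← hab]
      have hsnd : (x + b).2 = x.2 + b.2 := rfl
      rw [hsnd, hb2, add_zero]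
      rw [hM_H, Set.mem_setOf_eq] at hx
      exact hx
end
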